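/- Let R be a commutative ring in which 3 is invertible and let θ be a ring automorphism of R with θ(θ(θ(x))) = x for all x. Let 𝔪 be a maximal ideal of R and set I = 𝔪 ∩ θ(𝔪) ∩ θ(θ(𝔪)). Then the natural map R_θ → (R/I)_θ induced by the projection R → R/I is surjective; explicitly, for every x ∈ R with θ(x) − x ∈ I there exists y ∈ R with θ(y) = y and x − y ∈ I. -/
import Mathlib


/-- Over a commutative ring `R` with `3` invertible and a ring automorphism `θ` of order
dividing 3, for a maximal ideal `𝔪` and `I = 𝔪 ∩ θ(𝔪) ∩ θ(θ(𝔪))`, the natural map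
`R_θ → (R/I)_θ` is surjective. -/
theorem stmt_1 {R : Type*} [CommRing R] (h3 : IsUnit (3 : R))
    (θ : R ≃+* R) (hθ : ∀ x, θ (θ (θ x)) = x)
    (𝔪 : Ideal R) (hm : 𝔪.IsMaximal)
    (x : R)
    (hx : θ x - x ∈ 𝔪 ⊓ Ideal.map (θ : R →+* R) 𝔪
        ⊓ Ideal.map (θ : R →+* R) (Ideal.map (θ : R →+* R) 𝔪)) :
    ∃ y : R, θ y = y ∧ x - y ∈ 𝔪 ⊓ Ideal.map (θ : R →+* R) 𝔪
        ⊓ Ideal.map (θ : R →+* R) (Ideal.map (θ : R →+* R) 𝔪) := by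
  obtain ⟨u, hu⟩ := h3.exists_right_inv
  set I := 𝔪 ⊓ Ideal.map (θ : R →+* R) 𝔪
      ⊓ Ideal.map (θ : R →+* R) (Ideal.map (θ : R →+* R) 𝔪) with hI
  have hmap3 : Ideal.map (θ : R →+* R)
      (Ideal.map (θ : R →+* R) (Ideal.map (θ : R →+* R) 𝔪)) = 𝔪 := by
    rw [Ideal.map_map, Ideal.map_map]
    have hcomp : (((θ : R →+* R).comp (θ : R →+* R)).comp (θ : R →+* R)) = RingHom.id R := by
      ext z; simpa using hθ z
    rw [hcomp, Ideal.map_id]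
  have hIstab : ∀ a ∈ I, θ a ∈ I := by
    intro a ha
    obtain ⟨⟨h1, h2⟩, h3'⟩ := ha
    refine ⟨⟨?_, ?_⟩, ?_⟩
    · rw [← hmap3]; exact Ideal.mem_map_of_mem _ h3'
    · exact Ideal.mem_map_of_mem _ h1
    · exact Ideal.mem_map_of_mem _ h2
  have ha : θ x - x ∈ I := hx
  have hb : θ (θ x) - θ x ∈ I := by simpa using hIstab _ hx
  have h3u : (3 : R) * θ u = 1 := by
    have := congrArg θ hu
    simpa [map_ofNat] using this
  have hθu : θ u = u := by linear_combination u * h3u - θ u * hu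
  refine ⟨u * (x + θ x + θ (θ x)), ?_, ?_⟩
  · rw [map_mul, map_add, map_add, hθu, hθ x]
    ring
  · have heq : x - u * (x + θ x + θ (θ x)) =
        u * (-((θ x - x) + (θ x - x) + (θ (θ x) - θ x))) := by
      linear_combination (-x) * hu
    rw [heq]
    exact I.mul_mem_left _ (I.neg_mem (I.add_mem (I.add_mem ha ha) hb))
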